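/- Let λ be a weakly decreasing tuple of nonnegative integers of length n > 2, λ' = (λ_2,…,λ_n), α = λ + ρ_n, α' = (α_2,…,α_n), and let u be a nonnegative integer. Assume the inductive hypothesis: P_{λ'}(x;t) · ∏_{a=2}^{n−1}(x_1 − q x_a) = Σ_{μ ∈ GT_2(α')} M(α';μ) · x_1^{|α'|−|μ|} · ζ(P_{μ−ρ_{n−2}}(x;t)). Then Σ_{μ ∈ GT_2(α')} M(α';μ) · x_1^{|α'|−|μ|} · ζ(P_{(u)⌢(μ−ρ_{n−2})}(x;t)) = Σ_{i=2}^n x_i^u · ∏_{2≤a≤n, a≠i}(x_i − t x_a)/(x_i − x_a) · ζ_i(P_{λ'}(x;t)) · ∏_{2≤a≤n, a≠i}(x_1 − q x_a), where (u)⌢ν denotes the concatenation of (u) with the tuple ν. -/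

import Mathlib

open MvPolynomial Finset

noncomputable section

abbrev Rr : Type := MvPolynomial (Fin 2 ⊕ ℕ) ℚ

abbrev F : Type := FractionRing Rr

/-- The variable `q`. -/
def q : F := algebraMap Rr F (X (Sum.inl 0))

/-- The variable `t`. -/
def t : F := algebraMap Rr F (X (Sum.inl 1))

/-- `x k` is the variable `x_{k+1}` of the paper (0-indexed). -/
def x (k : ℕ) : F := algebraMap Rr F (X (Sum.inr k))

/-- Substitution endomorphism of `F` induced by an injective map of variables. -/
def subF (g : Fin 2 ⊕ ℕ → Fin 2 ⊕ ℕ) (hg : Function.Injective g) : F →+* F :=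
  IsFractionRing.lift (g := (algebraMap Rr F).comp (rename g).toRingHom)
    (by
      rw [RingHom.coe_comp]
      exact (IsFractionRing.injective Rr F).comp (rename_injective g hg))

def permNat (n : ℕ) (σ : Equiv.Perm (Fin n)) : ℕ → ℕ :=
  fun k => if h : k < n then (σ ⟨k, h⟩ : ℕ) else k

lemma permNat_inj (n : ℕ) (σ : Equiv.Perm (Fin n)) : Function.Injective (permNat n σ) := by
  intro a b hab
  unfold permNat at hab
  split_ifs at hab with h1 h2 h2
  · have := σ.injective (Fin.val_injective hab)
    exact congrArg Fin.val this
  · have := (σ ⟨a, h1⟩).isLt; omega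
  · have := (σ ⟨b, h2⟩).isLt; omega
  · exact hab

/-- The action of a permutation `σ ∈ S_n` on `F`, permuting `x_1, …, x_n`. -/
def pact (n : ℕ) (σ : Equiv.Perm (Fin n)) : F →+* F :=
  subF (Sum.map id (permNat n σ)) (Function.injective_id.sumMap (permNat_inj n σ))

def shiftNat (i : ℕ) : ℕ → ℕ := fun k => if k < i then k else k + 1

lemma shiftNat_inj (i : ℕ) : Function.Injective (shiftNat i) := by
  intro a b; unfold shiftNat; split_ifs <;> omega

/-- `zeta i` is the endomorphism `ζ_{i+1}` of the paper: it fixes `q`, `t` and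
`x k` for `k < i`, and sends `x k` to `x (k+1)` for `k ≥ i` (0-indexed). -/
def zeta (i : ℕ) : F →+* F :=
  subF (Sum.map id (shiftNat i)) (Function.injective_id.sumMap (shiftNat_inj i))

/-- `zetaP i j` is `ζ_{i+1,j+1}` of the paper. -/
def zetaP (i j : ℕ) : F →+* F := (zeta (max i j)).comp (zeta (min i j))

/-- The Hall–Littlewood polynomial `P_λ(x; t)` in `n` variables. -/
def HL (n : ℕ) (lam : Fin n → ℕ) : F :=
  ∑ σ : Equiv.Perm (Fin n), pact n σ
    ((∏ i : Fin n, x i.val ^ lam i) *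
      ∏ i : Fin n, ∏ j ∈ Finset.Ioi i, (x i.val - t * x j.val) / (x i.val - x j.val))

/-- `ρ_n`, 0-indexed: `rho n i = n - 1 - i`. -/
def rho (n : ℕ) : Fin n → ℕ := fun i => n - 1 - i.val

/-- The deformed Weyl denominator `Δ_n(c) = ∏_{i<j} (x_i - c x_j)`. -/
def DeltaQ (n : ℕ) (c : F) : F := ∏ i : Fin n, ∏ j ∈ Finset.Ioi i, (x i.val - c * x j.val)

/-- The Schur polynomial `s_λ(x) = Σ_σ σ(x^{λ+ρ}/Δ_n)`. -/
def Schur (n : ℕ) (lam : Fin n → ℕ) : F :=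
  ∑ σ : Equiv.Perm (Fin n), pact n σ
    ((∏ i : Fin n, x i.val ^ (lam i + rho n i)) / DeltaQ n 1)

/-- `GT2 n α` is the set of tuples `μ` of length `n` with `α_{i+1} ≤ μ_i ≤ α_i`. -/
def GT2 (n : ℕ) (α : Fin (n+1) → ℕ) : Finset (Fin n → ℕ) :=
  Fintype.piFinset (fun i => Finset.Icc (α i.succ) (α i.castSucc))

def GLw (y a : ℕ) : F := if y = a then -q else if y + 1 = a then t else 0

def GRw (y b : ℕ) : F := if y = b then 1 else if y = b + 1 then -q * t else 0

/-- `w(μ_j)` where `a1 = α_j`, `a2 = α_{j+1}`, `m = μ_j`. -/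
def wgt (a1 a2 m : ℕ) : F :=
  (if m = a1 ∨ m = a2 then 0 else (1 - q) * (1 - t)) + GLw m a1 + GRw m a2

/-- The tridiagonal determinant `M(α; μ)`. -/
def Mdet (n : ℕ) (α : Fin (n+1) → ℕ) (μ : Fin n → ℕ) : F :=
  Matrix.det (Matrix.of fun i j : Fin n =>
    if i = j then wgt (α i.castSucc) (α i.succ) (μ i)
    else if (i : ℕ) + 1 = (j : ℕ) then 1
    else if (j : ℕ) + 1 = (i : ℕ) then GRw (μ j) (α i.castSucc) * GLw (μ i) (α i.castSucc)
    else 0)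

def tot {n : ℕ} (f : Fin n → ℕ) : ℕ := ∑ i, f i


/-! ### Auxiliary lemmas -/

lemma subF_algebraMap (g : Fin 2 ⊕ ℕ → Fin 2 ⊕ ℕ) (hg : Function.Injective g)
    (p : Rr) : subF g hg (algebraMap Rr F p) = algebraMap Rr F (rename g p) :=
  IsFractionRing.lift_algebraMap _ p

lemma subF_comp (g1 g2 : Fin 2 ⊕ ℕ → Fin 2 ⊕ ℕ) (h1 : Function.Injective g1)
    (h2 : Function.Injective g2) :
    (subF g1 h1).comp (subF g2 h2) = subF (g1 ∘ g2) (h1.comp h2) := by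
  apply IsLocalization.ringHom_ext (nonZeroDivisors Rr)
  ext p
  all_goals simp only [RingHom.comp_apply, subF_algebraMap, rename_rename]

lemma subF_congr (g1 g2 : Fin 2 ⊕ ℕ → Fin 2 ⊕ ℕ) (h1 : Function.Injective g1)
    (h2 : Function.Injective g2) (h : g1 = g2) : subF g1 h1 = subF g2 h2 := by
  subst h; rfl

lemma zeta_x (i k : ℕ) : zeta i (x k) = x (shiftNat i k) := by
  rw [zeta, x, subF_algebraMap, rename_X]; rfl

lemma zeta_q (i : ℕ) : zeta i q = q := by
  rw [zeta, q, subF_algebraMap, rename_X]; rfl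

lemma zeta_t (i : ℕ) : zeta i t = t := by
  rw [zeta, t, subF_algebraMap, rename_X]; rfl

lemma pact_q (n : ℕ) (σ : Equiv.Perm (Fin n)) : pact n σ q = q := by
  rw [pact, q, subF_algebraMap, rename_X]; rfl

lemma pact_t (n : ℕ) (σ : Equiv.Perm (Fin n)) : pact n σ t = t := by
  rw [pact, t, subF_algebraMap, rename_X]; rfl

lemma pact_x (n : ℕ) (σ : Equiv.Perm (Fin n)) (j : Fin n) :
    pact n σ (x j.val) = x ((σ j).val) := by
  rw [pact, x, subF_algebraMap, rename_X]
  have : permNat n σ j.val = (σ j).val := by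
    unfold permNat; rw [dif_pos j.isLt]
  simp [Sum.map, this, x]

lemma zeta0_x (k : ℕ) : zeta 0 (x k) = x (k+1) := by
  rw [zeta_x]; unfold shiftNat; simp

lemma succAbove_val {n : ℕ} (i : Fin (n+1)) (b : Fin n) :
    ((i.succAbove b : Fin (n+1)) : ℕ) = shiftNat i.val b.val := by
  rw [Fin.succAbove, shiftNat]
  split_ifs with h1 h2 h2 <;> simp_all [Fin.lt_def]

/-- The permutation of `Fin (n+1)` sending `0 ↦ i` and `k.succ ↦ i.succAbove (τ k)`. -/
def insPerm {n : ℕ} (i : Fin (n+1)) (τ : Equiv.Perm (Fin n)) : Equiv.Perm (Fin (n+1)) :=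
  ((finSuccEquiv' 0).trans (Equiv.optionCongr τ)).trans (finSuccEquiv' i).symm

lemma insPerm_zero {n : ℕ} (i : Fin (n+1)) (τ : Equiv.Perm (Fin n)) :
    insPerm i τ 0 = i := by
  have h0 : finSuccEquiv' (0 : Fin (n+1)) 0 = none := by
    rw [finSuccEquiv'_zero]; rfl
  simp [insPerm, h0]

lemma insPerm_succ {n : ℕ} (i : Fin (n+1)) (τ : Equiv.Perm (Fin n)) (k : Fin n) :
    insPerm i τ k.succ = i.succAbove (τ k) := by
  have h1 : finSuccEquiv' (0 : Fin (n+1)) k.succ = some k := by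
    rw [← Fin.succAbove_zero, finSuccEquiv'_succAbove]
  simp [insPerm, h1]

lemma insPerm_bij (n : ℕ) :
    Function.Bijective (fun p : Fin (n+1) × Equiv.Perm (Fin n) => insPerm p.1 p.2) := by
  rw [Fintype.bijective_iff_injective_and_card]
  constructor
  · rintro ⟨i, τ⟩ ⟨i', τ'⟩ h
    simp only at h
    have hi : i = i' := by rw [← insPerm_zero i τ, ← insPerm_zero i' τ', h]
    subst hi
    refine Prod.ext rfl ?_
    ext k
    have := congrArg (fun σ : Equiv.Perm (Fin (n+1)) => σ k.succ) h
    simp only [insPerm_succ] at this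
    exact congrArg Fin.val (i.succAbove_right_injective this)
  · simp [Fintype.card_perm, Fintype.card_prod, Nat.factorial_succ]

lemma pact_insPerm_zeta (n : ℕ) (i : Fin (n+1)) (τ : Equiv.Perm (Fin n)) :
    (pact (n+1) (insPerm i τ)).comp (zeta 0) = (zeta i.val).comp (pact n τ) := by
  unfold pact zeta
  rw [subF_comp, subF_comp]
  apply subF_congr
  funext v
  rcases v with v | k
  · rfl
  · show Sum.inr (permNat (n+1) (insPerm i τ) (shiftNat 0 k)) =
      Sum.inr (shiftNat i.val (permNat n τ k))
    congr 1
    have hs0 : shiftNat 0 k = k + 1 := by simp [shiftNat]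
    rw [hs0]
    by_cases hk : k < n
    · have h1 : permNat (n+1) (insPerm i τ) (k+1) = ((insPerm i τ) (Fin.succ ⟨k, hk⟩)).val := by
        unfold permNat
        rw [dif_pos (by omega : k + 1 < n + 1)]
        rfl
      rw [h1, insPerm_succ, succAbove_val]
      unfold permNat
      rw [dif_pos hk]
    · have h1 : permNat (n+1) (insPerm i τ) (k+1) = k+1 := by
        unfold permNat; rw [dif_neg (by omega)]
      have h2 : permNat n τ k = k := by unfold permNat; rw [dif_neg hk]
      rw [h1, h2]
      have : ¬ k < i.val := by have := i.isLt; omega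
      simp [shiftNat, this]

lemma zeta0_zeta (i : ℕ) : (zeta 0).comp (zeta i) = (zeta (i+1)).comp (zeta 0) := by
  unfold zeta
  rw [subF_comp, subF_comp]
  apply subF_congr
  funext v
  rcases v with v | k
  · rfl
  · show Sum.inr (shiftNat 0 (shiftNat i k)) = Sum.inr (shiftNat (i+1) (shiftNat 0 k))
    congr 1
    unfold shiftNat
    split_ifs <;> omega

lemma zeta_GLw (i y a : ℕ) : zeta i (GLw y a) = GLw y a := by
  unfold GLw; split_ifs <;> simp [zeta_q, zeta_t]

lemma zeta_GRw (i y b : ℕ) : zeta i (GRw y b) = GRw y b := by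
  unfold GRw; split_ifs <;> simp [zeta_q, zeta_t]

lemma zeta_wgt (i a1 a2 mm : ℕ) : zeta i (wgt a1 a2 mm) = wgt a1 a2 mm := by
  unfold wgt
  rw [map_add, map_add, zeta_GLw, zeta_GRw]
  split_ifs <;> simp [zeta_q, zeta_t]

lemma zeta_Mdet (i n : ℕ) (α : Fin (n+1) → ℕ) (μ : Fin n → ℕ) :
    zeta i (Mdet n α μ) = Mdet n α μ := by
  unfold Mdet
  rw [RingHom.map_det]
  congr 1
  ext a b
  simp only [RingHom.mapMatrix_apply, Matrix.map_apply, Matrix.of_apply]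
  split_ifs <;> simp [zeta_wgt, zeta_GRw, zeta_GLw]

lemma zeta_x0_pow (i e : ℕ) (hi : 0 < i) : zeta i (x 0 ^ e) = x 0 ^ e := by
  rw [map_pow, zeta_x]
  simp [shiftNat, hi]

lemma Ioi_zero_erase (n : ℕ) : Finset.Ioi (0 : Fin (n+1)) = univ.erase 0 := by
  ext j
  simp [Fin.pos_iff_ne_zero]

lemma prod_perm_erase {N : ℕ} (σ : Equiv.Perm (Fin N)) (c : Fin N) (h : Fin N → F) :
    ∏ j ∈ univ.erase c, h (σ j) = ∏ a ∈ univ.erase (σ c), h a := by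
  have himg : Finset.image σ (univ.erase c) = univ.erase (σ c) := by
    ext a
    simp only [mem_image, mem_erase, mem_univ, and_true]
    constructor
    · rintro ⟨j, hj, rfl⟩
      exact fun hc => hj (σ.injective hc)
    · intro ha
      refine ⟨σ.symm a, ?_, by simp⟩
      intro hc
      apply ha
      rw [← hc, Equiv.apply_symm_apply]
  rw [← himg, Finset.prod_image (fun a _ b _ hab => σ.injective hab)]

lemma prod_erase_map_succ {n : ℕ} (i : Fin (n+1)) (h : ℕ → F) :
    ∏ a ∈ univ.erase i, h (a.val+1) = ∏ b ∈ (Finset.Icc 1 (n+1)).erase (i.val+1), h b := by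
  have himg : Finset.image (fun a : Fin (n+1) => a.val + 1) (univ.erase i)
      = (Finset.Icc 1 (n+1)).erase (i.val+1) := by
    ext b
    simp only [mem_image, mem_erase, mem_univ, and_true, mem_Icc]
    constructor
    · rintro ⟨a, ha, rfl⟩
      have h1 := a.isLt
      have h2 : a.val ≠ i.val := fun hh => ha (Fin.ext hh)
      omega
    · rintro ⟨hne, h1, h2⟩
      refine ⟨⟨b-1, by omega⟩, ?_, ?_⟩
      · intro hc
        apply hne
        have := congrArg Fin.val hc
        simp only at this
        omega
      · simp only
        omega
  rw [← himg, Finset.prod_image (fun a _ b _ hab => by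
    exact Fin.ext (by omega : a.val = b.val))]

lemma prod_shift_icc (m i : ℕ) (h1i : 1 ≤ i) (hi : i ≤ m+2) (h : ℕ → F) :
    ∏ a ∈ Finset.Icc 1 (m+1), h (shiftNat i a) = ∏ b ∈ (Finset.Icc 1 (m+2)).erase i, h b := by
  have himg : Finset.image (shiftNat i) (Finset.Icc 1 (m+1)) = (Finset.Icc 1 (m+2)).erase i := by
    ext b
    simp only [mem_image, mem_erase, mem_Icc]
    constructor
    · rintro ⟨a, ⟨ha1, ha2⟩, rfl⟩
      unfold shiftNat
      split_ifs <;> omega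
    · rintro ⟨hbne, hb1, hb2⟩
      by_cases hb : b < i
      · exact ⟨b, ⟨hb1, by omega⟩, by simp [shiftNat, hb]⟩
      · refine ⟨b-1, ⟨by omega, by omega⟩, ?_⟩
        unfold shiftNat
        rw [if_neg (by omega)]
        omega
  rw [← himg, Finset.prod_image (fun a _ b _ hab => shiftNat_inj i hab)]

lemma HL_cons (n u : ℕ) (ν : Fin n → ℕ) :
    HL (n+1) (Fin.cons u ν) =
    ∑ i : Fin (n+1), x i.val ^ u *
      (∏ a ∈ univ.erase i, (x i.val - t * x a.val) / (x i.val - x a.val)) *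
      zeta i.val (HL n ν) := by
  have hinner : (∏ i : Fin (n+1), x i.val ^ (Fin.cons u ν i)) *
      ∏ i : Fin (n+1), ∏ j ∈ Finset.Ioi i, (x i.val - t * x j.val) / (x i.val - x j.val)
    = (x 0 ^ u * ∏ j ∈ univ.erase (0 : Fin (n+1)), (x 0 - t * x j.val) / (x 0 - x j.val)) *
      zeta 0 ((∏ i : Fin n, x i.val ^ ν i) *
        ∏ i : Fin n, ∏ j ∈ Finset.Ioi i, (x i.val - t * x j.val) / (x i.val - x j.val)) := by
    rw [Fin.prod_univ_succ, Fin.prod_univ_succ, Ioi_zero_erase]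
    simp only [Fin.cons_zero, Fin.cons_succ, Fin.val_zero, Fin.val_succ, Fin.prod_Ioi_succ,
      map_mul, map_prod, map_pow, map_div₀, map_sub, zeta0_x, zeta_t]
    ring
  unfold HL
  simp only [hinner]
  rw [← Fintype.sum_bijective _ (insPerm_bij n)
    (fun p : Fin (n+1) × Equiv.Perm (Fin n) => pact (n+1) (insPerm p.1 p.2)
      ((x 0 ^ u * ∏ j ∈ univ.erase (0 : Fin (n+1)), (x 0 - t * x j.val) / (x 0 - x j.val)) *
        zeta 0 ((∏ i : Fin n, x i.val ^ ν i) *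
          ∏ i : Fin n, ∏ j ∈ Finset.Ioi i, (x i.val - t * x j.val) / (x i.val - x j.val))))
    _ (fun p => rfl)]
  rw [Fintype.sum_prod_type]
  refine Finset.sum_congr rfl (fun i _ => ?_)
  have hA : ∀ τ : Equiv.Perm (Fin n), pact (n+1) (insPerm i τ)
      (x 0 ^ u * ∏ j ∈ univ.erase (0 : Fin (n+1)), (x 0 - t * x j.val) / (x 0 - x j.val))
      = x i.val ^ u * ∏ a ∈ univ.erase i, (x i.val - t * x a.val) / (x i.val - x a.val) := by
    intro τ
    have h0 : pact (n+1) (insPerm i τ) (x 0) = x i.val := by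
      have := pact_x (n+1) (insPerm i τ) 0
      simpa [insPerm_zero] using this
    rw [map_mul, map_pow, h0, map_prod]
    congr 1
    have hterm : ∀ j : Fin (n+1), pact (n+1) (insPerm i τ)
        ((x 0 - t * x j.val) / (x 0 - x j.val))
        = (x i.val - t * x ((insPerm i τ) j).val) / (x i.val - x ((insPerm i τ) j).val) := by
      intro j
      rw [map_div₀, map_sub, map_sub, map_mul, h0, pact_t, pact_x]
    rw [Finset.prod_congr rfl (fun j _ => hterm j)]
    have := prod_perm_erase (insPerm i τ) 0
      (fun a => (x i.val - t * x a.val) / (x i.val - x a.val))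
    rw [this, insPerm_zero]
  have hB : ∀ τ : Equiv.Perm (Fin n), pact (n+1) (insPerm i τ)
      (zeta 0 ((∏ i : Fin n, x i.val ^ ν i) *
        ∏ i : Fin n, ∏ j ∈ Finset.Ioi i, (x i.val - t * x j.val) / (x i.val - x j.val)))
      = zeta i.val (pact n τ ((∏ i : Fin n, x i.val ^ ν i) *
        ∏ i : Fin n, ∏ j ∈ Finset.Ioi i, (x i.val - t * x j.val) / (x i.val - x j.val))) := by
    intro τ
    exact DFunLike.congr_fun (pact_insPerm_zeta n i τ) _
  calc ∑ τ : Equiv.Perm (Fin n), pact (n+1) (insPerm i τ) _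
      = ∑ τ : Equiv.Perm (Fin n),
        (x i.val ^ u * ∏ a ∈ univ.erase i, (x i.val - t * x a.val) / (x i.val - x a.val)) *
        zeta i.val (pact n τ ((∏ i : Fin n, x i.val ^ ν i) *
          ∏ i : Fin n, ∏ j ∈ Finset.Ioi i, (x i.val - t * x j.val) / (x i.val - x j.val))) := by
        refine Finset.sum_congr rfl (fun τ _ => ?_)
        rw [map_mul, hA τ, hB τ]
    _ = x i.val ^ u *
      (∏ a ∈ univ.erase i, (x i.val - t * x a.val) / (x i.val - x a.val)) *
      zeta i.val (HL n ν) := by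
        rw [← Finset.mul_sum, ← map_sum, HL]

lemma sum_fin_to_icc {n : ℕ} (G : ℕ → F) :
    ∑ i : Fin (n+1), G (i.val + 1) = ∑ b ∈ Finset.Icc 1 (n+1), G b := by
  have himg : Finset.image (fun i : Fin (n+1) => i.val + 1) univ = Finset.Icc 1 (n+1) := by
    ext b
    simp only [mem_image, mem_univ, true_and, mem_Icc]
    constructor
    · rintro ⟨a, rfl⟩
      have := a.isLt
      omega
    · rintro ⟨h1, h2⟩
      refine ⟨⟨b-1, by omega⟩, ?_⟩
      simp only
      omega
  rw [← himg, Finset.sum_image (fun a _ b _ hab => Fin.ext (by omega : a.val = b.val))]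

lemma zeta0_HL_cons (n u : ℕ) (ν : Fin n → ℕ) :
    zeta 0 (HL (n+1) (Fin.cons u ν)) =
    ∑ i ∈ Finset.Icc 1 (n+1), x i ^ u *
      (∏ a ∈ (Finset.Icc 1 (n+1)).erase i, (x i - t * x a) / (x i - x a)) *
      zeta i (zeta 0 (HL n ν)) := by
  have hterm : ∀ i : Fin (n+1),
      zeta 0 (x i.val ^ u *
        (∏ a ∈ univ.erase i, (x i.val - t * x a.val) / (x i.val - x a.val)) *
        zeta i.val (HL n ν)) =
      x (i.val+1) ^ u *
        (∏ a ∈ (Finset.Icc 1 (n+1)).erase (i.val+1), (x (i.val+1) - t * x a) / (x (i.val+1) - x a)) *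
        zeta (i.val+1) (zeta 0 (HL n ν)) := by
    intro i
    rw [map_mul, map_mul, map_pow, zeta0_x]
    congr 1
    · congr 1
      rw [map_prod, ← prod_erase_map_succ i (fun b => (x (i.val+1) - t * x b) / (x (i.val+1) - x b))]
      exact Finset.prod_congr rfl fun a _ => by
        rw [map_div₀, map_sub, map_sub, map_mul, zeta0_x, zeta0_x, zeta_t]
    · exact DFunLike.congr_fun (zeta0_zeta i.val) (HL n ν)
  calc zeta 0 (HL (n+1) (Fin.cons u ν))
      = ∑ i : Fin (n+1), (fun b => x b ^ u *
          (∏ a ∈ (Finset.Icc 1 (n+1)).erase b, (x b - t * x a) / (x b - x a)) *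
          zeta b (zeta 0 (HL n ν))) (i.val + 1) := by
        rw [HL_cons, map_sum]
        exact Finset.sum_congr rfl fun i _ => hterm i
    _ = _ := sum_fin_to_icc (fun b => x b ^ u *
          (∏ a ∈ (Finset.Icc 1 (n+1)).erase b, (x b - t * x a) / (x b - x a)) *
          zeta b (zeta 0 (HL n ν)))

/-- **Lemma 4, equation (GT1).** With `λ' = (λ_2,…,λ_n)`, `α' = (α_2,…,α_n)`
(where `α = λ + ρ_n`), assuming the inductive hypothesis, one has
`F_{λ'}(u) = Σ_{i=2}^n x_i^u ∏_{2≤a≤n, a≠i}(x_i-t x_a)/(x_i-x_a) ζ_i(P_{λ'}) ∏_{2≤a≤n, a≠i}(x_1-q x_a)`. -/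
theorem lemma_GT1 (m : ℕ) (lam : Fin (m + 3) → ℕ)
    (hlam : ∀ i j : Fin (m + 3), i ≤ j → lam j ≤ lam i) (u : ℕ)
    (IH : HL (m + 2) (fun j => lam j.succ) * ∏ a ∈ Finset.Icc 1 (m + 1), (x 0 - q * x a) =
      ∑ μ ∈ GT2 (m + 1) (fun i => lam i.succ + rho (m + 3) i.succ),
        Mdet (m + 1) (fun i => lam i.succ + rho (m + 3) i.succ) μ *
          x 0 ^ (tot (fun i : Fin (m + 2) => lam i.succ + rho (m + 3) i.succ) - tot μ) *
          zeta 0 (HL (m + 1) (fun i => μ i - rho (m + 1) i))) :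
    ∑ μ ∈ GT2 (m + 1) (fun i => lam i.succ + rho (m + 3) i.succ),
        Mdet (m + 1) (fun i => lam i.succ + rho (m + 3) i.succ) μ *
          x 0 ^ (tot (fun i : Fin (m + 2) => lam i.succ + rho (m + 3) i.succ) - tot μ) *
          zeta 0 (HL (m + 2) (Fin.cons u (fun i => μ i - rho (m + 1) i))) =
      ∑ i ∈ Finset.Icc 1 (m + 2),
        x i ^ u *
        (∏ a ∈ (Finset.Icc 1 (m + 2)).erase i, (x i - t * x a) / (x i - x a)) *
        zeta i (HL (m + 2) (fun j => lam j.succ)) *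
        ∏ a ∈ (Finset.Icc 1 (m + 2)).erase i, (x 0 - q * x a) := by
  have key : ∀ μ : Fin (m+1) → ℕ,
      zeta 0 (HL (m + 2) (Fin.cons u (fun i => μ i - rho (m+1) i))) =
      ∑ i ∈ Finset.Icc 1 (m + 2), x i ^ u *
        (∏ a ∈ (Finset.Icc 1 (m + 2)).erase i, (x i - t * x a) / (x i - x a)) *
        zeta i (zeta 0 (HL (m + 1) (fun i => μ i - rho (m+1) i))) :=
    fun μ => zeta0_HL_cons (m+1) u _
  simp only [key, Finset.mul_sum]
  rw [Finset.sum_comm]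
  refine Finset.sum_congr rfl fun i hi => ?_
  rw [Finset.mem_Icc] at hi
  obtain ⟨hi1, hi2⟩ := hi
  have hfix : ∀ μ ∈ GT2 (m + 1) (fun i => lam i.succ + rho (m + 3) i.succ),
      Mdet (m + 1) (fun i => lam i.succ + rho (m + 3) i.succ) μ *
        x 0 ^ (tot (fun i : Fin (m + 2) => lam i.succ + rho (m + 3) i.succ) - tot μ) *
        (x i ^ u *
          (∏ a ∈ (Finset.Icc 1 (m + 2)).erase i, (x i - t * x a) / (x i - x a)) *
          zeta i (zeta 0 (HL (m + 1) (fun i => μ i - rho (m+1) i))))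
      = (x i ^ u *
          (∏ a ∈ (Finset.Icc 1 (m + 2)).erase i, (x i - t * x a) / (x i - x a))) *
        zeta i (Mdet (m + 1) (fun i => lam i.succ + rho (m + 3) i.succ) μ *
          x 0 ^ (tot (fun i : Fin (m + 2) => lam i.succ + rho (m + 3) i.succ) - tot μ) *
          zeta 0 (HL (m + 1) (fun i => μ i - rho (m+1) i))) := by
    intro μ _
    rw [map_mul, map_mul, zeta_Mdet, zeta_x0_pow i _ (by omega)]
    ring
  rw [Finset.sum_congr rfl hfix, ← Finset.mul_sum, ← map_sum, ← IH]
  rw [map_mul, map_prod]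
  have hq : ∀ a ∈ Finset.Icc 1 (m+1),
      zeta i (x 0 - q * x a) = (fun b => x 0 - q * x b) (shiftNat i a) := by
    intro a _
    simp only
    rw [map_sub, map_mul, zeta_q, zeta_x, zeta_x,
      show shiftNat i 0 = 0 from by simp [shiftNat]; omega]
  rw [Finset.prod_congr rfl hq, prod_shift_icc m i hi1 hi2 (fun b => x 0 - q * x b)]
  ring

end
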